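/- Let φ ∈ C([0,1]), K(s,ζ) = ∫_{max(s,ζ)}^1 cos(φ(σ)) dσ, and λ ∈ ℝ with λ ∉ {−1, 0}. If μ ∈ L²(0,1) satisfies −(1+λ) μ(s) + ∫_0^1 K(s,ζ) μ(ζ) dζ = 0 for a.e. s, then μ agrees a.e. with a C¹ function, and θ(s) := ∫_0^s μ(σ) dσ satisfies (1+λ) θ''(s) + cos(φ(s)) θ(s) = 0 on [0,1] with θ(0) = 0. Consequently the eigenspace of the integral operator 𝒦 for any eigenvalue 1+λ ≠ 0, 1 is at most one-dimensional. -/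

import Mathlib

open MeasureTheory Set

open Topology in
lemma ftc_icc {f : ℝ → ℝ} (hf : ContinuousOn f (Icc 0 1)) {s : ℝ} (hs : s ∈ Icc (0:ℝ) 1) :
    HasDerivWithinAt (fun x => ∫ t in (0:ℝ)..x, f t) (f s) (Icc 0 1) s := by
  haveI : Fact (s ∈ Icc (0:ℝ) 1) := ⟨hs⟩
  have hint : IntervalIntegrable f volume 0 s := by
    apply ContinuousOn.intervalIntegrable
    rw [uIcc_of_le hs.1]
    exact hf.mono (Icc_subset_Icc le_rfl hs.2)
  have hmeas : StronglyMeasurableAtFilter f (𝓝[Icc (0:ℝ) 1] s) :=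
    ⟨Icc 0 1, self_mem_nhdsWithin, hf.aestronglyMeasurable measurableSet_Icc⟩
  exact intervalIntegral.integral_hasDerivWithinAt_right hint hmeas (hf s hs)

lemma key (φ : ℝ → ℝ) (hφ : Continuous φ) (μ : ℝ → ℝ) (hμ : IntervalIntegrable μ volume 0 1)
    {s : ℝ} (hs : s ∈ Icc (0:ℝ) 1) :
    ∫ ζ in (0:ℝ)..1, (∫ σ in max s ζ..1, Real.cos (φ σ)) * μ ζ
      = ∫ σ in s..1, Real.cos (φ σ) * ∫ ζ in (0:ℝ)..σ, μ ζ := by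
  set c : ℝ → ℝ := fun σ => Real.cos (φ σ) with hcdef
  have hc : Continuous c := Real.continuous_cos.comp hφ
  rw [intervalIntegral.integral_of_le (by norm_num : (0:ℝ) ≤ 1),
      intervalIntegral.integral_of_le hs.2]
  have step2 : ∀ ζ ∈ Ioc (0:ℝ) 1,
      (∫ σ in max s ζ..1, c σ) * μ ζ = ∫ σ in Ioc s 1, (Ioi ζ).indicator c σ * μ ζ := by
    intro ζ hζ
    have hind : ∀ σ : ℝ, (Ioi ζ).indicator c σ * μ ζ
        = (Ioi ζ).indicator (fun σ => c σ * μ ζ) σ := by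
      intro σ
      by_cases h : σ ∈ Ioi ζ <;> simp [Set.indicator_apply, h]
    simp only [hind]
    rw [setIntegral_indicator measurableSet_Ioi]
    have hset : Ioc s 1 ∩ Ioi ζ = Ioc (max s ζ) 1 := by
      ext σ
      simp only [mem_inter_iff, mem_Ioc, mem_Ioi, max_lt_iff]
      tauto
    rw [hset, intervalIntegral.integral_of_le (max_le hs.2 hζ.2), integral_mul_const]
  rw [setIntegral_congr_fun measurableSet_Ioc step2]
  have hμ' : IntegrableOn μ (Ioc (0:ℝ) 1) := hμ.1
  have hswap : ∫ ζ in Ioc (0:ℝ) 1, ∫ σ in Ioc s 1, (Ioi ζ).indicator c σ * μ ζ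
      = ∫ σ in Ioc s 1, ∫ ζ in Ioc (0:ℝ) 1, (Ioi ζ).indicator c σ * μ ζ := by
    apply MeasureTheory.integral_integral_swap
    have hbase : Integrable (fun q : ℝ × ℝ => μ q.1 * c q.2)
        ((volume.restrict (Ioc (0:ℝ) 1)).prod (volume.restrict (Ioc s 1))) :=
      Integrable.mul_prod hμ' (hc.integrableOn_Ioc)
    have heq : (Function.uncurry fun ζ σ => (Ioi ζ).indicator c σ * μ ζ)
        = ({q : ℝ × ℝ | q.1 < q.2}).indicator (fun q => μ q.1 * c q.2) := by
      funext p
      rcases p with ⟨ζ, σ⟩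
      by_cases h : ζ < σ <;>
        simp [Function.uncurry, Set.indicator_apply, h, mul_comm]
    rw [heq]
    exact hbase.indicator (measurableSet_lt measurable_fst measurable_snd)
  rw [hswap]
  apply setIntegral_congr_fun measurableSet_Ioc
  intro σ hσ
  have hσ0 : (0:ℝ) ≤ σ := le_of_lt (lt_of_le_of_lt hs.1 hσ.1)
  have h1 : ∀ ζ : ℝ, (Ioi ζ).indicator c σ * μ ζ = (Iio σ).indicator μ ζ * c σ := by
    intro ζ
    by_cases h : ζ < σ <;> simp [Set.indicator_apply, h, mul_comm]
  simp only [h1]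
  rw [integral_mul_const, setIntegral_indicator measurableSet_Iio]
  have h2 : Ioc (0:ℝ) 1 ∩ Iio σ = Ioo 0 σ := by
    ext ζ
    simp only [mem_inter_iff, mem_Ioc, mem_Iio, mem_Ioo]
    constructor
    · rintro ⟨⟨h3, h4⟩, h5⟩; exact ⟨h3, h5⟩
    · rintro ⟨h3, h5⟩; exact ⟨⟨h3, le_trans (le_of_lt h5) hσ.2⟩, h5⟩
  rw [h2, ← integral_Ioc_eq_integral_Ioo, ← intervalIntegral.integral_of_le hσ0, mul_comm]
lemma partA (φ : ℝ → ℝ) (hφ : Continuous φ)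
    (K : ℝ → ℝ → ℝ)
    (hK : ∀ s ζ, K s ζ = ∫ σ in max s ζ..1, Real.cos (φ σ))
    (lam : ℝ) (hlam1 : lam ≠ -1)
    (μ : ℝ → ℝ) (hμint : IntervalIntegrable μ volume 0 1)
    (heig : ∀ᵐ s ∂(volume.restrict (Icc (0:ℝ) 1)),
        -(1 + lam) * μ s + (∫ ζ in (0:ℝ)..1, K s ζ * μ ζ) = 0) :
    ∃ ν : ℝ → ℝ,
        (∀ᵐ s ∂(volume.restrict (Icc (0:ℝ) 1)), μ s = ν s) ∧
        ContinuousOn ν (Icc 0 1) ∧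
        (∀ s ∈ Icc (0:ℝ) 1,
          HasDerivWithinAt (fun x => ∫ σ in (0:ℝ)..x, μ σ) (ν s) (Icc 0 1) s) ∧
        (∀ s ∈ Icc (0:ℝ) 1,
          HasDerivWithinAt ν
            (-(Real.cos (φ s) / (1 + lam)) * ∫ σ in (0:ℝ)..s, μ σ) (Icc 0 1) s) := by
  have h1lam : (1:ℝ) + lam ≠ 0 := fun h => hlam1 (by linarith)
  set Θ : ℝ → ℝ := fun x => ∫ σ in (0:ℝ)..x, μ σ with hΘdef
  have hΘc : ContinuousOn Θ (Icc 0 1) := by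
    have := intervalIntegral.continuousOn_primitive_interval
      (f := μ) (a := (0:ℝ)) (b := 1) (μ := volume) ?_
    · rwa [uIcc_of_le (by norm_num : (0:ℝ) ≤ 1)] at this
    · rw [uIcc_of_le (by norm_num : (0:ℝ) ≤ 1)]
      exact hμint.1.congr_set_ae Ioc_ae_eq_Icc.symm
  set h : ℝ → ℝ := fun σ => Real.cos (φ σ) * Θ σ with hhdef
  have hhc : ContinuousOn h (Icc 0 1) :=
    ((Real.continuous_cos.comp hφ).continuousOn).mul hΘc
  have hhint : ∀ x ∈ Icc (0:ℝ) 1, IntervalIntegrable h volume 0 x := by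
    intro x hx
    apply ContinuousOn.intervalIntegrable
    rw [uIcc_of_le hx.1]
    exact hhc.mono (Icc_subset_Icc le_rfl hx.2)
  set P : ℝ → ℝ := fun x => ∫ σ in (0:ℝ)..x, h σ with hPdef
  set C : ℝ := P 1 with hCdef
  set ν : ℝ → ℝ := fun x => (C - P x) / (1 + lam) with hνdef
  have hPc : ContinuousOn P (Icc 0 1) := by
    have := intervalIntegral.continuousOn_primitive_interval
      (f := h) (a := (0:ℝ)) (b := 1) (μ := volume) ?_
    · rwa [uIcc_of_le (by norm_num : (0:ℝ) ≤ 1)] at this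
    · rw [uIcc_of_le (by norm_num : (0:ℝ) ≤ 1)]
      exact (hhc.integrableOn_Icc)
  have hνc : ContinuousOn ν (Icc 0 1) := (continuousOn_const.sub hPc).div_const _
  have hint : ∀ s ∈ Icc (0:ℝ) 1, (∫ ζ in (0:ℝ)..1, K s ζ * μ ζ) = C - P s := by
    intro s hs
    have h1 : (∫ ζ in (0:ℝ)..1, K s ζ * μ ζ)
        = ∫ σ in s..1, Real.cos (φ σ) * ∫ ζ in (0:ℝ)..σ, μ ζ := by
      simp only [hK]
      exact key φ hφ μ hμint hs
    have hs1int : IntervalIntegrable h volume s 1 := by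
      apply ContinuousOn.intervalIntegrable
      rw [uIcc_of_le hs.2]
      exact hhc.mono (Icc_subset_Icc hs.1 le_rfl)
    have h2 : P s + ∫ σ in s..1, h σ = C :=
      intervalIntegral.integral_add_adjacent_intervals (hhint s hs) hs1int
    rw [h1]
    have h4 : (∫ σ in s..1, Real.cos (φ σ) * ∫ ζ in (0:ℝ)..σ, μ ζ) = ∫ σ in s..1, h σ := rfl
    rw [h4]; linarith
  have haeq : ∀ᵐ s ∂(volume.restrict (Icc (0:ℝ) 1)), μ s = ν s := by
    filter_upwards [heig, ae_restrict_mem measurableSet_Icc] with s h1 h2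
    have h3 := hint s h2
    rw [h3] at h1
    rw [hνdef]
    field_simp at h1 ⊢
    linarith
  refine ⟨ν, haeq, hνc, ?_, ?_⟩
  · intro s hs
    have hftc : HasDerivWithinAt (fun x => ∫ t in (0:ℝ)..x, ν t) (ν s) (Icc 0 1) s :=
      ftc_icc hνc hs
    have heqy : ∀ y ∈ Icc (0:ℝ) 1, Θ y = ∫ t in (0:ℝ)..y, ν t := by
      intro y hy
      rw [hΘdef]
      simp only
      rw [intervalIntegral.integral_of_le hy.1, intervalIntegral.integral_of_le hy.1]
      apply integral_congr_ae
      exact ae_restrict_of_ae_restrict_of_subset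
        (Ioc_subset_Icc_self.trans (Icc_subset_Icc le_rfl hy.2)) haeq
    exact hftc.congr heqy (heqy s hs)
  · intro s hs
    have hP' : HasDerivWithinAt P (h s) (Icc 0 1) s := ftc_icc hhc hs
    have := ((hasDerivWithinAt_const s (Icc (0:ℝ) 1) C).sub hP').div_const (1 + lam)
    have hval : (0 - h s) / (1 + lam) = -(Real.cos (φ s) / (1 + lam)) * Θ s := by
      rw [hhdef]; ring
    rw [hval] at this
    exact this

lemma ode_zero (lam : ℝ) (h1lam : (1:ℝ) + lam ≠ 0) (c : ℝ → ℝ) (hc : ∀ t, |c t| ≤ 1)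
    (θ ν : ℝ → ℝ)
    (hθ : ∀ s ∈ Icc (0:ℝ) 1, HasDerivWithinAt θ (ν s) (Icc 0 1) s)
    (hν : ∀ s ∈ Icc (0:ℝ) 1, HasDerivWithinAt ν (-(c s / (1 + lam)) * θ s) (Icc 0 1) s)
    (h0 : θ 0 = 0) (h0' : ν 0 = 0) : ∀ s ∈ Icc (0:ℝ) 1, θ s = 0 ∧ ν s = 0 := by
  set v : ℝ → ℝ × ℝ → ℝ × ℝ := fun t p => (p.2, -(c t / (1 + lam)) * p.1) with hvdef
  have hL : (0:ℝ) ≤ 1 + 1 / |1 + lam| := by positivity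
  set L : NNReal := ⟨1 + 1 / |1 + lam|, hL⟩ with hLdef
  have hLc : (L : ℝ) = 1 + 1 / |1 + lam| := rfl
  have hL1 : (1:ℝ) ≤ L := by
    rw [hLc]
    have : (0:ℝ) ≤ 1 / |1 + lam| := by positivity
    linarith
  have hv : ∀ t, LipschitzWith L (v t) := by
    intro t
    apply LipschitzWith.of_dist_le_mul
    intro p q
    rw [Prod.dist_eq]
    have habs : |c t / (1 + lam)| ≤ (L:ℝ) := by
      rw [abs_div, hLc]
      have hp : (0:ℝ) < |1 + lam| := abs_pos.mpr h1lam
      have h2 : |c t| / |1 + lam| ≤ 1 / |1 + lam| := by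
        gcongr
        exact hc t
      linarith
    apply max_le
    · have hle : dist p.2 q.2 ≤ dist p q := by
        rw [Prod.dist_eq]; exact le_max_right _ _
      calc dist (v t p).1 (v t q).1 = dist p.2 q.2 := rfl
        _ ≤ dist p q := hle
        _ ≤ (L:ℝ) * dist p q := by nlinarith [dist_nonneg (x := p) (y := q)]
    · have hle : dist p.1 q.1 ≤ dist p q := by
        rw [Prod.dist_eq]; exact le_max_left _ _
      calc dist (v t p).2 (v t q).2 = |c t / (1 + lam)| * dist p.1 q.1 := by
            simp only [hvdef, Real.dist_eq]
            have h4 : -(c t / (1 + lam)) * p.1 - -(c t / (1 + lam)) * q.1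
                = -(c t / (1 + lam) * (p.1 - q.1)) := by ring
            rw [h4, abs_neg, abs_mul]
        _ ≤ (L:ℝ) * dist p q := by
            have h3 : (0:ℝ) ≤ dist p.1 q.1 := dist_nonneg
            have h5 : (0:ℝ) ≤ |c t / (1 + lam)| := abs_nonneg _
            nlinarith [dist_nonneg (x := p) (y := q)]
  set F : ℝ → ℝ × ℝ := fun t => (θ t, ν t) with hFdef
  have hFc : ContinuousOn F (Icc 0 1) := fun t ht =>
    ((hθ t ht).continuousWithinAt.prodMk (hν t ht).continuousWithinAt)
  have hF' : ∀ t ∈ Ico (0:ℝ) 1, HasDerivWithinAt F (v t (F t)) (Ici t) t := by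
    intro t ht
    have h1 := ((hθ t (Ico_subset_Icc_self ht)).prodMk (hν t (Ico_subset_Icc_self ht)))
    exact h1.mono_of_mem_nhdsWithin (Icc_mem_nhdsGE_of_mem ht)
  have hG' : ∀ t ∈ Ico (0:ℝ) 1,
      HasDerivWithinAt (fun _ : ℝ => ((0:ℝ), (0:ℝ))) (v t ((0:ℝ), (0:ℝ))) (Ici t) t := by
    intro t ht
    have : v t ((0:ℝ), (0:ℝ)) = (0, 0) := by simp [hvdef]
    rw [this]
    exact hasDerivWithinAt_const t _ _
  have heq : EqOn F (fun _ => ((0:ℝ), (0:ℝ))) (Icc 0 1) :=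
    ODE_solution_unique hv hFc hF' continuousOn_const hG' (by simp [hFdef, h0, h0'])
  intro s hs
  have := heq hs
  rw [hFdef] at this
  exact ⟨congrArg Prod.fst this, congrArg Prod.snd this⟩

/-- any `L²` eigenfunction of the integral operator with kernel
`K(s,ζ) = ∫_{max(s,ζ)}^1 cos(φ(σ)) dσ` for an eigenvalue `1 + λ ∉ {0, 1}` agrees a.e.
with a `C¹` function, its primitive `θ` solves `(1+λ) θ'' + cos(φ) θ = 0`, `θ(0) = 0`,
and consequently each such eigenspace is at most one-dimensional. -/
theorem stmt_3 (φ : ℝ → ℝ) (hφ : Continuous φ)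
    (K : ℝ → ℝ → ℝ)
    (hK : ∀ s ζ, K s ζ = ∫ σ in max s ζ..1, Real.cos (φ σ))
    (lam : ℝ) (hlam1 : lam ≠ -1) (hlam0 : lam ≠ 0) :
    (∀ μ : ℝ → ℝ, IntervalIntegrable μ volume 0 1 →
      (∀ᵐ s ∂(volume.restrict (Icc (0:ℝ) 1)),
        -(1 + lam) * μ s + (∫ ζ in (0:ℝ)..1, K s ζ * μ ζ) = 0) →
      ∃ ν : ℝ → ℝ,
        (∀ᵐ s ∂(volume.restrict (Icc (0:ℝ) 1)), μ s = ν s) ∧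
        ContinuousOn ν (Icc 0 1) ∧
        (∀ s ∈ Icc (0:ℝ) 1,
          HasDerivWithinAt (fun x => ∫ σ in (0:ℝ)..x, μ σ) (ν s) (Icc 0 1) s) ∧
        (∀ s ∈ Icc (0:ℝ) 1,
          HasDerivWithinAt ν
            (-(Real.cos (φ s) / (1 + lam)) * ∫ σ in (0:ℝ)..s, μ σ) (Icc 0 1) s)) ∧
    (∀ μ₁ μ₂ : ℝ → ℝ, IntervalIntegrable μ₁ volume 0 1 → IntervalIntegrable μ₂ volume 0 1 →
      (∀ᵐ s ∂(volume.restrict (Icc (0:ℝ) 1)),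
        -(1 + lam) * μ₁ s + (∫ ζ in (0:ℝ)..1, K s ζ * μ₁ ζ) = 0) →
      (∀ᵐ s ∂(volume.restrict (Icc (0:ℝ) 1)),
        -(1 + lam) * μ₂ s + (∫ ζ in (0:ℝ)..1, K s ζ * μ₂ ζ) = 0) →
      ∃ c₁ c₂ : ℝ, ¬(c₁ = 0 ∧ c₂ = 0) ∧
        (∀ᵐ s ∂(volume.restrict (Icc (0:ℝ) 1)), c₁ * μ₁ s + c₂ * μ₂ s = 0)) := by
  have h1lam : (1:ℝ) + lam ≠ 0 := fun h => hlam1 (by linarith)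
  constructor
  · intro μ hμint heig
    exact partA φ hφ K hK lam hlam1 μ hμint heig
  · intro μ₁ μ₂ h₁ h₂ he₁ he₂
    obtain ⟨ν₁, hae₁, hc₁, hd₁, hd₁'⟩ := partA φ hφ K hK lam hlam1 μ₁ h₁ he₁
    obtain ⟨ν₂, hae₂, hc₂, hd₂, hd₂'⟩ := partA φ hφ K hK lam hlam1 μ₂ h₂ he₂
    have hcos : ∀ t, |Real.cos (φ t)| ≤ 1 := fun t => Real.abs_cos_le_one _
    by_cases hz : ν₁ 0 = 0
    · have hzero := ode_zero lam h1lam (fun t => Real.cos (φ t)) hcos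
        (fun x => ∫ σ in (0:ℝ)..x, μ₁ σ) ν₁ hd₁ hd₁' (by simp) hz
      refine ⟨1, 0, by simp, ?_⟩
      filter_upwards [hae₁, ae_restrict_mem measurableSet_Icc] with s hs1 hs2
      have := (hzero s hs2).2
      rw [hs1, this]
      ring
    · set θ : ℝ → ℝ := fun x => ν₂ 0 * (∫ σ in (0:ℝ)..x, μ₁ σ)
        + (-(ν₁ 0)) * (∫ σ in (0:ℝ)..x, μ₂ σ) with hθdef
      set ν : ℝ → ℝ := fun x => ν₂ 0 * ν₁ x + (-(ν₁ 0)) * ν₂ x with hνdef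
      have hθ' : ∀ s ∈ Icc (0:ℝ) 1, HasDerivWithinAt θ (ν s) (Icc 0 1) s := by
        intro s hs
        exact ((hd₁ s hs).const_mul _).add ((hd₂ s hs).const_mul _)
      have hν' : ∀ s ∈ Icc (0:ℝ) 1,
          HasDerivWithinAt ν (-(Real.cos (φ s) / (1 + lam)) * θ s) (Icc 0 1) s := by
        intro s hs
        have := ((hd₁' s hs).const_mul (ν₂ 0)).add ((hd₂' s hs).const_mul (-(ν₁ 0)))
        have hval : ν₂ 0 * (-(Real.cos (φ s) / (1 + lam)) * ∫ σ in (0:ℝ)..s, μ₁ σ)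
            + (-(ν₁ 0)) * (-(Real.cos (φ s) / (1 + lam)) * ∫ σ in (0:ℝ)..s, μ₂ σ)
            = -(Real.cos (φ s) / (1 + lam)) * θ s := by
          rw [hθdef]; ring
        rw [hval] at this
        exact this
      have hzero := ode_zero lam h1lam (fun t => Real.cos (φ t)) hcos θ ν hθ' hν'
        (by simp [hθdef]) (by simp [hνdef]; ring)
      refine ⟨ν₂ 0, -(ν₁ 0), ?_, ?_⟩
      · rintro ⟨-, hh⟩
        exact hz (neg_eq_zero.mp hh)
      · filter_upwards [hae₁, hae₂, ae_restrict_mem measurableSet_Icc] with s hs1 hs2 hs3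
        have := (hzero s hs3).2
        rw [hs1, hs2]
        rw [hνdef] at this
        simpa using this
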